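/- Fix λ > 0. The function ν ↦ ζ(λ, ν) is differentiable on (0, ∞) with derivative ∂ζ/∂ν = −∑_{s=0}^∞ ln(s!) λ^s / (s!)^ν, and the cumulant identity E[ln(Y!)] = −∂ ln ζ(λ, ν)/∂ν holds: ∑_{y=0}^∞ ln(y!) · λ^y / ((y!)^ν ζ(λ, ν)) = −(∂ζ/∂ν)(λ, ν) / ζ(λ, ν). -/

import Mathlib

open Filter


/-- The Conway–Maxwell Poisson normalizing constant
`ζ(λ, ν) = ∑_{s=0}^∞ λ^s / (s!)^ν`. -/
noncomputable def cmpZeta (lam nu : ℝ) : ℝ :=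
  ∑' s : ℕ, lam ^ s / (s.factorial : ℝ) ^ nu

/-- Fix `λ > 0`. The function `ν ↦ ζ(λ, ν)` is differentiable on `(0, ∞)` with derivative
`∂ζ/∂ν = −∑_{s=0}^∞ ln(s!) λ^s / (s!)^ν`, and the cumulant identity
`E[ln(Y!)] = −∂ ln ζ(λ, ν)/∂ν` holds:
`∑_y ln(y!) λ^y / ((y!)^ν ζ(λ, ν)) = −(∂ζ/∂ν)/ζ(λ, ν)`. -/
lemma summable_cmp (lam d : ℝ) (hlam : 0 < lam) (hd : 0 < d) :
    Summable (fun n : ℕ => lam ^ n / (n.factorial : ℝ) ^ d) := by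
  apply summable_of_ratio_norm_eventually_le (r := 1/2) (by norm_num)
  have htend : Tendsto (fun n : ℕ => ((n : ℝ) + 1) ^ d) atTop atTop :=
    (tendsto_rpow_atTop hd).comp
      (tendsto_atTop_add_const_right _ 1 tendsto_natCast_atTop_atTop)
  filter_upwards [htend.eventually_ge_atTop (2 * lam)] with n hn
  have hfac : (0 : ℝ) < (n.factorial : ℝ) := by exact_mod_cast n.factorial_pos
  have hfac1 : (0 : ℝ) < ((n + 1).factorial : ℝ) := by exact_mod_cast (n + 1).factorial_pos
  have hpos : 0 < ((n : ℝ) + 1) ^ d := Real.rpow_pos_of_pos (by positivity) d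
  rw [Real.norm_eq_abs, Real.norm_eq_abs, abs_of_pos (by positivity), abs_of_pos (by positivity)]
  have hfe : ((n + 1).factorial : ℝ) = ((n : ℝ) + 1) * (n.factorial : ℝ) := by
    push_cast [Nat.factorial_succ]; ring
  rw [hfe, Real.mul_rpow (by positivity) (by positivity)]
  have h1 : lam / ((n : ℝ) + 1) ^ d ≤ 1 / 2 := by
    rw [div_le_div_iff₀ hpos (by norm_num)]
    linarith
  have : lam ^ (n + 1) / (((n : ℝ) + 1) ^ d * (n.factorial : ℝ) ^ d)
      = (lam / ((n : ℝ) + 1) ^ d) * (lam ^ n / (n.factorial : ℝ) ^ d) := by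
    rw [pow_succ]; field_simp
  rw [this]
  have h2 : 0 ≤ lam ^ n / (n.factorial : ℝ) ^ d := by positivity
  calc (lam / ((n : ℝ) + 1) ^ d) * (lam ^ n / (n.factorial : ℝ) ^ d)
      ≤ (1 / 2) * (lam ^ n / (n.factorial : ℝ) ^ d) := by
        apply mul_le_mul_of_nonneg_right h1 h2
    _ = 1 / 2 * (lam ^ n / (n.factorial : ℝ) ^ d) := rfl

theorem cmp_logfactorial_cumulant (lam : ℝ) (hlam : 0 < lam) :
    ∀ nu : ℝ, 0 < nu →
      HasDerivAt (fun v : ℝ => cmpZeta lam v)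
        (-∑' s : ℕ, Real.log (s.factorial : ℝ) * lam ^ s / (s.factorial : ℝ) ^ nu) nu ∧
      (∑' y : ℕ, Real.log (y.factorial : ℝ) * lam ^ y
          / ((y.factorial : ℝ) ^ nu * cmpZeta lam nu))
        = -(-∑' s : ℕ, Real.log (s.factorial : ℝ) * lam ^ s / (s.factorial : ℝ) ^ nu)
            / cmpZeta lam nu := by

  intro nu hnu
  set t : Set ℝ := Set.Ioi (nu / 2) with ht
  have hmem : nu ∈ t := by simp [ht, Set.mem_Ioi]; linarith
  -- the summable bound
  have hu : Summable (fun n : ℕ => (4 / nu) * (lam ^ n / (n.factorial : ℝ) ^ (nu / 4))) :=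
    (summable_cmp lam (nu / 4) hlam (by linarith)).mul_left _
  have key : HasDerivAt (fun v : ℝ => ∑' n : ℕ, lam ^ n / (n.factorial : ℝ) ^ v)
      (∑' n : ℕ, -(Real.log (n.factorial : ℝ) * lam ^ n / (n.factorial : ℝ) ^ nu)) nu := by
    apply hasDerivAt_tsum_of_isPreconnected hu isOpen_Ioi isPreconnected_Ioi
      (g := fun (n : ℕ) (v : ℝ) => lam ^ n / (n.factorial : ℝ) ^ v)
      (g' := fun (n : ℕ) (v : ℝ) => -(Real.log (n.factorial : ℝ) * lam ^ n / (n.factorial : ℝ) ^ v))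
    · intro n v hv
      have hA : (0 : ℝ) < (n.factorial : ℝ) := by exact_mod_cast n.factorial_pos
      have hAv : (0 : ℝ) < (n.factorial : ℝ) ^ v := Real.rpow_pos_of_pos hA v
      have h1 : HasDerivAt (fun x : ℝ => (n.factorial : ℝ) ^ x)
          ((n.factorial : ℝ) ^ v * Real.log (n.factorial : ℝ)) v :=
        (Real.hasStrictDerivAt_const_rpow hA v).hasDerivAt
      have h2 := (h1.inv hAv.ne').const_mul (lam ^ n)
      have heq : (fun x : ℝ => lam ^ n * ((n.factorial : ℝ) ^ x)⁻¹)
          = fun x : ℝ => lam ^ n / (n.factorial : ℝ) ^ x := by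
        funext x; rw [div_eq_mul_inv]
      simp only [Pi.inv_apply] at h2
      rw [heq] at h2
      refine h2.congr_deriv ?_
      rw [pow_two, neg_div, mul_div_mul_left _ _ hAv.ne']
      ring
    · intro n v hv
      have hA : (0 : ℝ) < (n.factorial : ℝ) := by exact_mod_cast n.factorial_pos
      have hA1 : (1 : ℝ) ≤ (n.factorial : ℝ) := by exact_mod_cast n.factorial_pos
      have hlog : 0 ≤ Real.log (n.factorial : ℝ) := Real.log_nonneg hA1
      have hAv : (0 : ℝ) < (n.factorial : ℝ) ^ v := Real.rpow_pos_of_pos hA v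
      have hA2 : (0 : ℝ) < (n.factorial : ℝ) ^ (nu / 2) := Real.rpow_pos_of_pos hA _
      have hA4 : (0 : ℝ) < (n.factorial : ℝ) ^ (nu / 4) := Real.rpow_pos_of_pos hA _
      rw [norm_neg, Real.norm_eq_abs, abs_of_nonneg (by positivity)]
      have hv' : nu / 2 ≤ v := le_of_lt hv
      have hmono : (n.factorial : ℝ) ^ (nu / 2) ≤ (n.factorial : ℝ) ^ v :=
        Real.rpow_le_rpow_of_exponent_le hA1 hv'
      have step1 : Real.log (n.factorial : ℝ) * lam ^ n / (n.factorial : ℝ) ^ v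
          ≤ Real.log (n.factorial : ℝ) * lam ^ n / (n.factorial : ℝ) ^ (nu / 2) := by
        gcongr
      have hlogle : Real.log (n.factorial : ℝ) ≤ (n.factorial : ℝ) ^ (nu / 4) / (nu / 4) :=
        Real.log_le_rpow_div hA.le (by linarith)
      have step2 : Real.log (n.factorial : ℝ) * lam ^ n / (n.factorial : ℝ) ^ (nu / 2)
          ≤ ((n.factorial : ℝ) ^ (nu / 4) / (nu / 4)) * lam ^ n / (n.factorial : ℝ) ^ (nu / 2) := by
        gcongr
      have hsplit : (n.factorial : ℝ) ^ (nu / 2)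
          = (n.factorial : ℝ) ^ (nu / 4) * (n.factorial : ℝ) ^ (nu / 4) := by
        rw [← Real.rpow_add hA]; ring_nf
      have step3 : ((n.factorial : ℝ) ^ (nu / 4) / (nu / 4)) * lam ^ n / (n.factorial : ℝ) ^ (nu / 2)
          = (4 / nu) * (lam ^ n / (n.factorial : ℝ) ^ (nu / 4)) := by
        rw [hsplit]; field_simp
      linarith [step1, step2, step3 ▸ step2]
    · exact hmem
    · exact summable_cmp lam nu hlam hnu
    · exact hmem
  constructor
  · have : (∑' n : ℕ, -(Real.log (n.factorial : ℝ) * lam ^ n / (n.factorial : ℝ) ^ nu))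
        = -∑' s : ℕ, Real.log (s.factorial : ℝ) * lam ^ s / (s.factorial : ℝ) ^ nu :=
      tsum_neg
    rw [this] at key
    exact key
  · rw [neg_neg]
    have : ∀ y : ℕ, Real.log (y.factorial : ℝ) * lam ^ y
        / ((y.factorial : ℝ) ^ nu * cmpZeta lam nu)
        = (Real.log (y.factorial : ℝ) * lam ^ y / (y.factorial : ℝ) ^ nu) / cmpZeta lam nu :=
      fun y => div_mul_eq_div_div _ _ _
    rw [tsum_congr this, tsum_div_const]
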